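/- arXiv:2104.14620 — 2 statements merged into one kernel-verified Lean document; each statement's English description precedes it below -/
import Mathlib

section
/- Let θ¹ and θ² be random variables with values in 𝕋 = [−π,π) that are NOT independent, and let w : ℤ² → (0,∞) satisfy w(r₁,r₂) > 0 for all (r₁,r₂) ∈ ℤ² and Σ_{(r₁,r₂)∈ℤ²} w(r₁,r₂) < ∞. Then, for an i.i.d. sample (θ¹ᵢ, θ²ᵢ), i = 1,…,n, from (θ¹, θ²), the statistic T_{n,w} tends to +∞ almost surely as n → ∞. -/
open MeasureTheory ProbabilityTheory Filter Real
open scoped BigOperators Topology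


/-- The empirical characteristic function difference
`D^{(n)}(r₁,r₂) = φ̂(r₁,r₂) − φ̂₁(r₁)φ̂₂(r₂)` computed from the sample `(a j, b j)`, `j < n`. -/
noncomputable def ecfD (n : ℕ) (a b : ℕ → ℝ) (r : ℤ × ℤ) : ℂ :=
  (n : ℂ)⁻¹ * ∑ j ∈ Finset.range n, Complex.exp (Complex.I * (((r.1 : ℝ) * a j + (r.2 : ℝ) * b j : ℝ) : ℂ))
    - ((n : ℂ)⁻¹ * ∑ j ∈ Finset.range n, Complex.exp (Complex.I * (((r.1 : ℝ) * a j : ℝ) : ℂ)))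
        * ((n : ℂ)⁻¹ * ∑ j ∈ Finset.range n, Complex.exp (Complex.I * (((r.2 : ℝ) * b j : ℝ) : ℂ)))

namespace TnwAux

open Complex Submodule Set AddCircle

set_option synthInstance.maxHeartbeats 1000000

/-- Characters on the 2-torus. -/
noncomputable def char2 (T : ℝ) (r : ℤ × ℤ) : C(AddCircle T × AddCircle T, ℂ) :=
  ((fourier r.1).comp (ContinuousMap.fst)) * ((fourier r.2).comp (ContinuousMap.snd))

lemma char2_apply (T : ℝ) (r : ℤ × ℤ) (z : AddCircle T × AddCircle T) :
    char2 T r z = fourier r.1 z.1 * fourier r.2 z.2 := rfl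

lemma char2_zero (T : ℝ) : char2 T 0 = 1 := by
  ext z
  simp [char2_apply, fourier_zero]

lemma char2_mul (T : ℝ) (r s : ℤ × ℤ) : char2 T r * char2 T s = char2 T (r + s) := by
  ext z
  simp only [ContinuousMap.mul_apply, char2_apply, Prod.fst_add, Prod.snd_add, fourier_add]
  ring

lemma char2_star (T : ℝ) (r : ℤ × ℤ) : char2 T (-r) = star (char2 T r) := by
  ext z
  simp only [char2_apply, ContinuousMap.star_apply, char2_apply, Prod.fst_neg, Prod.snd_neg,
    fourier_neg, RCLike.star_def, map_mul]

/-- The star subalgebra generated by the 2-torus characters. -/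
noncomputable def char2Alg (T : ℝ) : StarSubalgebra ℂ C(AddCircle T × AddCircle T, ℂ) where
  toSubalgebra := Algebra.adjoin ℂ (Set.range (char2 T))
  star_mem' := by
    show Algebra.adjoin ℂ (Set.range (char2 T)) ≤ star (Algebra.adjoin ℂ (Set.range (char2 T)))
    refine Algebra.adjoin_le ?_
    rintro - ⟨r, rfl⟩
    exact Algebra.subset_adjoin ⟨-r, char2_star T r⟩

lemma char2Alg_coe (T : ℝ) :
    Subalgebra.toSubmodule (char2Alg T).toSubalgebra = span ℂ (Set.range (char2 T)) := by
  show Subalgebra.toSubmodule (Algebra.adjoin ℂ (Set.range (char2 T))) = span ℂ (Set.range (char2 T))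
  apply Algebra.adjoin_eq_span_of_subset
  refine Subset.trans ?_ Submodule.subset_span
  intro x hx
  refine Submonoid.closure_induction (fun _ => id) ⟨0, (char2_zero T)⟩ ?_ hx
  rintro - - - - ⟨m, rfl⟩ ⟨n, rfl⟩
  exact ⟨m + n, (char2_mul T m n).symm⟩

variable {T : ℝ} [hT : Fact (0 < T)]

lemma char2Alg_separatesPoints : (char2Alg T).SeparatesPoints := by
  intro x y hxy
  have h : x.1 ≠ y.1 ∨ x.2 ≠ y.2 := by
    by_contra hc
    push_neg at hc
    exact hxy (Prod.ext hc.1 hc.2)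
  rcases h with h | h
  · have hmem : char2 T (1, 0) ∈ char2Alg T := Algebra.subset_adjoin ⟨(1, 0), rfl⟩
    refine ⟨_, ⟨char2 T (1, 0), hmem, rfl⟩, ?_⟩
    simp only [char2_apply, fourier_one, fourier_zero, mul_one]
    contrapose! h
    rw [Circle.coe_inj] at h
    exact injective_toCircle hT.out.ne' h
  · have hmem : char2 T (0, 1) ∈ char2Alg T := Algebra.subset_adjoin ⟨(0, 1), rfl⟩
    refine ⟨_, ⟨char2 T (0, 1), hmem, rfl⟩, ?_⟩
    simp only [char2_apply, fourier_one, fourier_zero, one_mul]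
    contrapose! h
    rw [Circle.coe_inj] at h
    exact injective_toCircle hT.out.ne' h

lemma char2Alg_closure_eq_top : (char2Alg T).topologicalClosure = ⊤ :=
  ContinuousMap.starSubalgebra_topologicalClosure_eq_top_of_separatesPoints _
    char2Alg_separatesPoints

lemma span_char2_closure_eq_top :
    (span ℂ (Set.range (char2 T))).topologicalClosure = ⊤ := by
  rw [← char2Alg_coe]
  exact congr_arg (Subalgebra.toSubmodule <| StarSubalgebra.toSubalgebra ·)
    char2Alg_closure_eq_top

section Aux2

open Complex Submodule Set AddCircle

variable {X : Type*} [TopologicalSpace X] [CompactSpace X] [MeasurableSpace X]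
  [OpensMeasurableSpace X]

lemma integrable_cm (μ : Measure X) [IsFiniteMeasure μ] (f : C(X, ℂ)) : Integrable f μ :=
  (integrable_const ‖f‖).mono' f.continuous.aestronglyMeasurable
    (Filter.Eventually.of_forall fun x => f.norm_coe_le_norm x)

lemma integral_dist_le (μ : Measure X) [IsProbabilityMeasure μ] (f g : C(X, ℂ)) :
    ‖(∫ z, f z ∂μ) - ∫ z, g z ∂μ‖ ≤ dist f g := by
  rw [← integral_sub (integrable_cm μ f) (integrable_cm μ g)]
  have h1 : ‖∫ z, (f z - g z) ∂μ‖ ≤ ∫ _z, dist f g ∂μ := by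
    apply norm_integral_le_of_norm_le (integrable_const _)
    refine Filter.Eventually.of_forall fun z => ?_
    rw [← dist_eq_norm]
    exact ContinuousMap.dist_apply_le_dist z
  simpa using h1

lemma integral_eq_of_char2 {T : ℝ} [hT : Fact (0 < T)]
    (κ ν : Measure (AddCircle T × AddCircle T))
    [IsProbabilityMeasure κ] [IsProbabilityMeasure ν]
    (h : ∀ r : ℤ × ℤ, ∫ z, TnwAux.char2 T r z ∂κ = ∫ z, TnwAux.char2 T r z ∂ν)
    (f : C(AddCircle T × AddCircle T, ℂ)) : ∫ z, f z ∂κ = ∫ z, f z ∂ν := by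
  set M : Set C(AddCircle T × AddCircle T, ℂ) :=
    {f | ∫ z, f z ∂κ = ∫ z, f z ∂ν} with hM
  have hclosed : IsClosed M := by
    have hcont : Continuous fun f : C(AddCircle T × AddCircle T, ℂ) =>
        (∫ z, f z ∂κ) - ∫ z, f z ∂ν := by
      apply (LipschitzWith.of_dist_le_mul (K := 2) ?_).continuous
      intro f g
      have h1 := integral_dist_le κ f g
      have h2 := integral_dist_le ν f g
      rw [dist_eq_norm]
      have : ((∫ z, f z ∂κ) - ∫ z, f z ∂ν) - ((∫ z, g z ∂κ) - ∫ z, g z ∂ν)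
          = ((∫ z, f z ∂κ) - ∫ z, g z ∂κ) - ((∫ z, f z ∂ν) - ∫ z, g z ∂ν) := by ring
      rw [this]
      calc ‖((∫ z, f z ∂κ) - ∫ z, g z ∂κ) - ((∫ z, f z ∂ν) - ∫ z, g z ∂ν)‖
          ≤ ‖(∫ z, f z ∂κ) - ∫ z, g z ∂κ‖ + ‖(∫ z, f z ∂ν) - ∫ z, g z ∂ν‖ := norm_sub_le _ _
        _ ≤ dist f g + dist f g := add_le_add h1 h2
        _ = 2 * dist f g := by ring
    have : M = (fun f : C(AddCircle T × AddCircle T, ℂ) =>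
        (∫ z, f z ∂κ) - ∫ z, f z ∂ν) ⁻¹' {0} := by
      ext f
      simp [hM, sub_eq_zero]
    rw [this]
    exact IsClosed.preimage hcont isClosed_singleton
  have hspan : (span ℂ (Set.range (TnwAux.char2 T)) : Set C(AddCircle T × AddCircle T, ℂ)) ⊆ M := by
    intro f hf
    induction hf using Submodule.span_induction with
    | mem g hg => obtain ⟨r, rfl⟩ := hg; exact h r
    | zero => simp [hM]
    | add g₁ g₂ _ _ hg₁ hg₂ =>
        simp only [hM, mem_setOf_eq, ContinuousMap.add_apply] at hg₁ hg₂ ⊢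
        rw [integral_add (integrable_cm κ g₁) (integrable_cm κ g₂),
          integral_add (integrable_cm ν g₁) (integrable_cm ν g₂), hg₁, hg₂]
    | smul c g _ hg =>
        simp only [hM, mem_setOf_eq, ContinuousMap.smul_apply] at hg ⊢
        rw [integral_smul, integral_smul, hg]
  have htop : f ∈ closure (span ℂ (Set.range (TnwAux.char2 T)) :
      Set C(AddCircle T × AddCircle T, ℂ)) := by
    have h1 : f ∈ (span ℂ (Set.range (TnwAux.char2 T))).topologicalClosure := by
      rw [TnwAux.span_char2_closure_eq_top]
      trivial
    exact h1
  exact closure_minimal hspan hclosed htop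

lemma torus_meas_ext {T : ℝ} [hT : Fact (0 < T)]
    (κ ν : Measure (AddCircle T × AddCircle T))
    [IsProbabilityMeasure κ] [IsProbabilityMeasure ν]
    (h : ∀ r : ℤ × ℤ, ∫ z, TnwAux.char2 T r z ∂κ = ∫ z, TnwAux.char2 T r z ∂ν) : κ = ν := by
  apply ext_of_forall_lintegral_eq_of_IsFiniteMeasure
  intro f
  have hre : ∫ x, ((f x : ℝ)) ∂κ = ∫ x, ((f x : ℝ)) ∂ν := by
    have hc : Continuous fun x : AddCircle T × AddCircle T => ((f x : ℝ) : ℂ) := by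
      exact Complex.continuous_ofReal.comp (NNReal.continuous_coe.comp f.continuous)
    have := integral_eq_of_char2 κ ν h ⟨_, hc⟩
    simp only [ContinuousMap.coe_mk] at this
    have e1 : ∫ z, (((f z : ℝ)) : ℂ) ∂κ = ((∫ z, (f z : ℝ) ∂κ : ℝ) : ℂ) := integral_ofReal
    have e2 : ∫ z, (((f z : ℝ)) : ℂ) ∂ν = ((∫ z, (f z : ℝ) ∂ν : ℝ) : ℂ) := integral_ofReal
    rw [e1, e2] at this
    exact_mod_cast this
  have h1 := BoundedContinuousFunction.toReal_lintegral_coe_eq_integral f κ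
  have h2 := BoundedContinuousFunction.toReal_lintegral_coe_eq_integral f ν
  have fin1 : ∫⁻ x, f x ∂κ ≠ ⊤ := (BoundedContinuousFunction.lintegral_lt_top_of_nnreal κ f).ne
  have fin2 : ∫⁻ x, f x ∂ν ≠ ⊤ := (BoundedContinuousFunction.lintegral_lt_top_of_nnreal ν f).ne
  rw [← ENNReal.toReal_eq_toReal_iff' fin1 fin2]
  rw [h1, h2]
  exact hre

end Aux2
section Aux3

open Complex Set AddCircle

/-- The square `[-π, π) × [-π, π)`. -/
noncomputable def sqS : Set (ℝ × ℝ) := Ico (-Real.pi) Real.pi ×ˢ Ico (-Real.pi) Real.pi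

lemma measurableSet_sqS : MeasurableSet sqS :=
  measurableSet_Ico.prod measurableSet_Ico

lemma square_meas_ext (κ ν : Measure (ℝ × ℝ))
    [IsProbabilityMeasure κ] [IsProbabilityMeasure ν]
    (hκ : κ sqSᶜ = 0) (hν : ν sqSᶜ = 0)
    (h : ∀ r : ℤ × ℤ,
      ∫ p, Complex.exp (Complex.I * (((r.1 : ℝ) * p.1 + (r.2 : ℝ) * p.2 : ℝ) : ℂ)) ∂κ =
      ∫ p, Complex.exp (Complex.I * (((r.1 : ℝ) * p.1 + (r.2 : ℝ) * p.2 : ℝ) : ℂ)) ∂ν) :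
    κ = ν := by
  haveI : Fact (0 < 2 * Real.pi) := ⟨by positivity⟩
  set T : ℝ := 2 * Real.pi with hTdef
  -- the quotient map to the torus
  set q : ℝ × ℝ → AddCircle T × AddCircle T :=
    fun p => ((p.1 : AddCircle T), (p.2 : AddCircle T)) with hqdef
  have hq : Measurable q :=
    (AddCircle.measurable_mk'.comp measurable_fst).prodMk
      (AddCircle.measurable_mk'.comp measurable_snd)
  have hchar : ∀ (r : ℤ × ℤ) (p : ℝ × ℝ), TnwAux.char2 T r (q p) =
      Complex.exp (Complex.I * (((r.1 : ℝ) * p.1 + (r.2 : ℝ) * p.2 : ℝ) : ℂ)) := by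
    intro r p
    rw [TnwAux.char2_apply]
    show fourier r.1 ((p.1 : ℝ) : AddCircle T) * fourier r.2 ((p.2 : ℝ) : AddCircle T) = _
    rw [fourier_coe_apply, fourier_coe_apply, ← Complex.exp_add]
    congr 1
    have hπ : (Real.pi : ℂ) ≠ 0 := Complex.ofReal_ne_zero.mpr Real.pi_ne_zero
    rw [hTdef]
    push_cast
    field_simp
  haveI : IsProbabilityMeasure (κ.map q) := Measure.isProbabilityMeasure_map hq.aemeasurable
  haveI : IsProbabilityMeasure (ν.map q) := Measure.isProbabilityMeasure_map hq.aemeasurable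
  have htorus : κ.map q = ν.map q := by
    apply torus_meas_ext
    intro r
    rw [integral_map hq.aemeasurable (TnwAux.char2 T r).continuous.aestronglyMeasurable,
      integral_map hq.aemeasurable (TnwAux.char2 T r).continuous.aestronglyMeasurable]
    simp only [hchar]
    exact h r
  -- the inverse map
  set e := AddCircle.measurableEquivIco T (-Real.pi) with hedef
  set g : AddCircle T × AddCircle T → ℝ × ℝ :=
    fun z => ((e z.1 : ℝ), (e z.2 : ℝ)) with hgdef
  have hg : Measurable g :=
    ((measurable_subtype_coe.comp e.measurable).comp measurable_fst).prodMk
      ((measurable_subtype_coe.comp e.measurable).comp measurable_snd)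
  have hIco : ∀ x : ℝ, x ∈ Ico (-Real.pi) Real.pi → (e ((x : ℝ) : AddCircle T) : ℝ) = x := by
    intro x hx
    have hx' : x ∈ Ico (-Real.pi) (-Real.pi + T) := by
      rwa [show -Real.pi + T = Real.pi by rw [hTdef]; ring]
    have : (AddCircle.equivIco T (-Real.pi)) ((x : ℝ) : AddCircle T) = ⟨x, hx'⟩ := by
      rw [Equiv.apply_eq_iff_eq_symm_apply]
      rfl
    show ((AddCircle.equivIco T (-Real.pi)) ((x : ℝ) : AddCircle T) : ℝ) = x
    rw [this]
  have hgq : ∀ p ∈ sqS, g (q p) = p := by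
    rintro ⟨x, y⟩ ⟨hx, hy⟩
    simp only [hgdef, hqdef]
    rw [hIco x hx, hIco y hy]
  have key : ∀ (m : Measure (ℝ × ℝ)), IsProbabilityMeasure m → m sqSᶜ = 0 →
      (m.map q).map g = m := by
    intro m _ hm
    rw [Measure.map_map hg hq]
    have hae : (g ∘ q) =ᵐ[m] id := by
      have hS : ∀ᵐ p ∂m, p ∈ sqS := by
        rw [MeasureTheory.ae_iff]
        have : {p : ℝ × ℝ | ¬p ∈ sqS} = sqSᶜ := rfl
        rw [this]
        exact hm
      filter_upwards [hS] with p hp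
      exact hgq p hp
    rw [Measure.map_congr hae, Measure.map_id]
  rw [← key κ inferInstance hκ, ← key ν inferInstance hν, htorus]

end Aux3
section Aux4

open Complex Set

lemma exists_bad_char {Ω : Type*} [MeasurableSpace Ω] (μ : Measure Ω) [IsProbabilityMeasure μ]
    (θ1 θ2 : Ω → ℝ) (hθ1 : Measurable θ1) (hθ2 : Measurable θ2)
    (hθ1T : ∀ ω, θ1 ω ∈ Set.Ico (-Real.pi) Real.pi)
    (hθ2T : ∀ ω, θ2 ω ∈ Set.Ico (-Real.pi) Real.pi)
    (hnotindep : ¬ IndepFun θ1 θ2 μ) :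
    ∃ r : ℤ × ℤ,
      (∫ ω, Complex.exp (Complex.I * (((r.1 : ℝ) * θ1 ω + (r.2 : ℝ) * θ2 ω : ℝ) : ℂ)) ∂μ) ≠
      (∫ ω, Complex.exp (Complex.I * (((r.1 : ℝ) * θ1 ω : ℝ) : ℂ)) ∂μ) *
      (∫ ω, Complex.exp (Complex.I * (((r.2 : ℝ) * θ2 ω : ℝ) : ℂ)) ∂μ) := by
  by_contra hcon
  push_neg at hcon
  apply hnotindep
  rw [ProbabilityTheory.indepFun_iff_map_prod_eq_prod_map_map hθ1.aemeasurable hθ2.aemeasurable]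
  haveI : IsProbabilityMeasure (μ.map (fun ω => (θ1 ω, θ2 ω))) :=
    Measure.isProbabilityMeasure_map ((hθ1.prodMk hθ2).aemeasurable)
  haveI : IsProbabilityMeasure (μ.map θ1) := Measure.isProbabilityMeasure_map hθ1.aemeasurable
  haveI : IsProbabilityMeasure (μ.map θ2) := Measure.isProbabilityMeasure_map hθ2.aemeasurable
  apply square_meas_ext
  · rw [Measure.map_apply (hθ1.prodMk hθ2) measurableSet_sqS.compl]
    have : (fun ω => (θ1 ω, θ2 ω)) ⁻¹' sqSᶜ = ∅ := by
      ext ω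
      simp only [mem_preimage, mem_compl_iff, mem_empty_iff_false, iff_false, not_not, sqS]
      exact ⟨hθ1T ω, hθ2T ω⟩
    rw [this]
    simp
  · have hsub : sqSᶜ ⊆ ((Ico (-Real.pi) Real.pi)ᶜ ×ˢ (univ : Set ℝ)) ∪
        ((univ : Set ℝ) ×ˢ (Ico (-Real.pi) Real.pi)ᶜ) := by
      rintro ⟨x, y⟩ hp
      simp only [sqS, mem_compl_iff, Set.mem_prod, not_and_or] at hp
      rcases hp with hx | hy
      · exact Or.inl ⟨hx, mem_univ _⟩
      · exact Or.inr ⟨mem_univ _, hy⟩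
    refine measure_mono_null hsub (measure_union_null ?_ ?_)
    · rw [Measure.prod_prod]
      rw [Measure.map_apply hθ1 measurableSet_Ico.compl]
      have : θ1 ⁻¹' (Ico (-Real.pi) Real.pi)ᶜ = ∅ := by
        ext ω; simp [hθ1T ω]
      rw [this]
      simp
    · rw [Measure.prod_prod]
      rw [Measure.map_apply hθ2 measurableSet_Ico.compl]
      have : θ2 ⁻¹' (Ico (-Real.pi) Real.pi)ᶜ = ∅ := by
        ext ω; simp [hθ2T ω]
      rw [this]
      simp
  · intro r
    have hG : Continuous fun p : ℝ × ℝ =>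
        Complex.exp (Complex.I * (((r.1 : ℝ) * p.1 + (r.2 : ℝ) * p.2 : ℝ) : ℂ)) := by
      apply Complex.continuous_exp.comp
      apply continuous_const.mul
      exact Complex.continuous_ofReal.comp
        (((continuous_const.mul continuous_fst).add (continuous_const.mul continuous_snd)))
    have hf1 : Continuous fun x : ℝ => Complex.exp (Complex.I * (((r.1 : ℝ) * x : ℝ) : ℂ)) := by
      apply Complex.continuous_exp.comp
      exact continuous_const.mul (Complex.continuous_ofReal.comp (continuous_const.mul continuous_id))
    have hf2 : Continuous fun x : ℝ => Complex.exp (Complex.I * (((r.2 : ℝ) * x : ℝ) : ℂ)) := by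
      apply Complex.continuous_exp.comp
      exact continuous_const.mul (Complex.continuous_ofReal.comp (continuous_const.mul continuous_id))
    rw [integral_map ((hθ1.prodMk hθ2).aemeasurable) hG.aestronglyMeasurable]
    have hsplit : ∀ p : ℝ × ℝ,
        Complex.exp (Complex.I * (((r.1 : ℝ) * p.1 + (r.2 : ℝ) * p.2 : ℝ) : ℂ)) =
        Complex.exp (Complex.I * (((r.1 : ℝ) * p.1 : ℝ) : ℂ)) *
        Complex.exp (Complex.I * (((r.2 : ℝ) * p.2 : ℝ) : ℂ)) := by
      intro p
      rw [← Complex.exp_add]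
      congr 1
      push_cast
      ring
    rw [show (fun p : ℝ × ℝ =>
        Complex.exp (Complex.I * (((r.1 : ℝ) * p.1 + (r.2 : ℝ) * p.2 : ℝ) : ℂ))) =
        fun p : ℝ × ℝ => Complex.exp (Complex.I * (((r.1 : ℝ) * p.1 : ℝ) : ℂ)) *
          Complex.exp (Complex.I * (((r.2 : ℝ) * p.2 : ℝ) : ℂ)) from funext hsplit]
    rw [MeasureTheory.integral_prod_mul
      (f := fun x : ℝ => Complex.exp (Complex.I * (((r.1 : ℝ) * x : ℝ) : ℂ)))
      (g := fun y : ℝ => Complex.exp (Complex.I * (((r.2 : ℝ) * y : ℝ) : ℂ)))]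
    rw [integral_map hθ1.aemeasurable hf1.aestronglyMeasurable,
      integral_map hθ2.aemeasurable hf2.aestronglyMeasurable]
    exact hcon r

lemma norm_expI (x : ℝ) : ‖Complex.exp (Complex.I * (x : ℂ))‖ = 1 := by
  rw [Complex.norm_exp]
  simp

lemma slln_exp {Ω : Type*} [MeasurableSpace Ω] (μ : Measure Ω) [IsProbabilityMeasure μ]
    (Θ : ℕ → Ω → ℝ × ℝ) (hΘmeas : ∀ i, Measurable (Θ i))
    (hiid : iIndepFun Θ μ)
    (hident0 : ∀ i, IdentDistrib (Θ i) (Θ 0) μ μ)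
    (G : ℝ × ℝ → ℂ) (hG : Measurable G) (hGb : ∀ p, ‖G p‖ ≤ 1) :
    ∀ᵐ ω ∂μ, Tendsto (fun n : ℕ => (n : ℂ)⁻¹ * ∑ j ∈ Finset.range n, G (Θ j ω)) atTop
      (𝓝 (∫ ω', G (Θ 0 ω') ∂μ)) := by
  have hint : Integrable (G ∘ Θ 0) μ :=
    (integrable_const (1 : ℝ)).mono' ((hG.comp (hΘmeas 0)).aestronglyMeasurable)
      (Filter.Eventually.of_forall fun ω => hGb (Θ 0 ω))
  have hindep : Pairwise (Function.onFun (fun f g => IndepFun f g μ) fun i => G ∘ Θ i) :=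
    fun i j hij => (hiid.indepFun hij).comp hG hG
  have hident' : ∀ i, IdentDistrib (G ∘ Θ i) (G ∘ Θ 0) μ μ := fun i => (hident0 i).comp hG
  have h := ProbabilityTheory.strong_law_ae (fun i => G ∘ Θ i) hint hindep hident'
  filter_upwards [h] with ω hω
  have hfun : (fun n : ℕ => (n : ℂ)⁻¹ * ∑ j ∈ Finset.range n, G (Θ j ω)) =
      fun n : ℕ => (n : ℝ)⁻¹ • ∑ j ∈ Finset.range n, (G ∘ Θ j) ω := by
    funext n
    rw [Complex.real_smul]
    push_cast
    rfl
  rw [hfun]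
  exact hω

end Aux4
section Aux5

lemma key_avg_le_one (n : ℕ) (f : ℕ → ℂ) (hf : ∀ j, ‖f j‖ ≤ 1) :
    ‖(n : ℂ)⁻¹ * ∑ j ∈ Finset.range n, f j‖ ≤ 1 := by
  rw [norm_mul, norm_inv]
  have h2 : ‖(n : ℂ)‖ = (n : ℝ) := by simp
  rw [h2]
  rcases Nat.eq_zero_or_pos n with h | h
  · simp [h]
  have h1 : ‖∑ j ∈ Finset.range n, f j‖ ≤ (n : ℝ) := by
    calc ‖∑ j ∈ Finset.range n, f j‖ ≤ ∑ j ∈ Finset.range n, ‖f j‖ := norm_sum_le _ _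
      _ ≤ ∑ _j ∈ Finset.range n, (1 : ℝ) := Finset.sum_le_sum fun j _ => hf j
      _ = n := by simp
  calc (n : ℝ)⁻¹ * ‖∑ j ∈ Finset.range n, f j‖ ≤ (n : ℝ)⁻¹ * n :=
        mul_le_mul_of_nonneg_left h1 (by positivity)
    _ = 1 := by field_simp

lemma norm_ecfD_le (n : ℕ) (a b : ℕ → ℝ) (r : ℤ × ℤ) : ‖ecfD n a b r‖ ≤ 2 := by
  have h0 := key_avg_le_one n
    (fun j => Complex.exp (Complex.I * (((r.1 : ℝ) * a j + (r.2 : ℝ) * b j : ℝ) : ℂ)))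
    (fun j => le_of_eq (norm_expI _))
  have h1 := key_avg_le_one n
    (fun j => Complex.exp (Complex.I * (((r.1 : ℝ) * a j : ℝ) : ℂ)))
    (fun j => le_of_eq (norm_expI _))
  have h2 := key_avg_le_one n
    (fun j => Complex.exp (Complex.I * (((r.2 : ℝ) * b j : ℝ) : ℂ)))
    (fun j => le_of_eq (norm_expI _))
  unfold ecfD
  refine (norm_sub_le _ _).trans ?_
  have h3 : ‖((n : ℂ)⁻¹ * ∑ j ∈ Finset.range n,
        Complex.exp (Complex.I * (((r.1 : ℝ) * a j : ℝ) : ℂ))) *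
      ((n : ℂ)⁻¹ * ∑ j ∈ Finset.range n,
        Complex.exp (Complex.I * (((r.2 : ℝ) * b j : ℝ) : ℂ)))‖ ≤ 1 := by
    rw [norm_mul]
    exact mul_le_one₀ h1 (norm_nonneg _) h2
  linarith

end Aux5
end TnwAux

/-- Proposition 4 (second part): if the circular random variables `θ¹` and `θ²` are not
independent and the weight `w` is strictly positive and summable, then `T_{n,w} → +∞`
almost surely. -/
theorem Tnw_tendsto_atTop_of_not_indep
    {Ω : Type*} [MeasurableSpace Ω] (μ : Measure Ω) [IsProbabilityMeasure μ]
    (θ1 θ2 : Ω → ℝ) (hθ1 : Measurable θ1) (hθ2 : Measurable θ2)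
    (hθ1T : ∀ ω, θ1 ω ∈ Set.Ico (-Real.pi) Real.pi)
    (hθ2T : ∀ ω, θ2 ω ∈ Set.Ico (-Real.pi) Real.pi)
    (hnotindep : ¬ IndepFun θ1 θ2 μ)
    (Θ : ℕ → Ω → ℝ × ℝ) (hΘmeas : ∀ i, Measurable (Θ i))
    (hiid : iIndepFun Θ μ)
    (hident : ∀ i, IdentDistrib (Θ i) (fun ω => (θ1 ω, θ2 ω)) μ μ)
    (w : ℤ × ℤ → ℝ) (hw : ∀ r, 0 < w r) (hsum : Summable w) :
    ∀ᵐ ω ∂μ, Tendsto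
      (fun n : ℕ =>
        (n : ℝ) * ∑' r : ℤ × ℤ,
          ‖ecfD n (fun i => (Θ i ω).1) (fun i => (Θ i ω).2) r‖ ^ 2 * w r)
      atTop atTop := by
  obtain ⟨r0, hr0⟩ := TnwAux.exists_bad_char μ θ1 θ2 hθ1 hθ2 hθ1T hθ2T hnotindep
  set c : ℂ :=
    (∫ ω, Complex.exp (Complex.I * (((r0.1 : ℝ) * θ1 ω + (r0.2 : ℝ) * θ2 ω : ℝ) : ℂ)) ∂μ) -
    (∫ ω, Complex.exp (Complex.I * (((r0.1 : ℝ) * θ1 ω : ℝ) : ℂ)) ∂μ) *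
    (∫ ω, Complex.exp (Complex.I * (((r0.2 : ℝ) * θ2 ω : ℝ) : ℂ)) ∂μ) with hcdef
  have hc : c ≠ 0 := sub_ne_zero.mpr hr0
  have hident0 : ∀ i, IdentDistrib (Θ i) (Θ 0) μ μ := fun i => (hident i).trans (hident 0).symm
  set G0 : ℝ × ℝ → ℂ :=
    fun p => Complex.exp (Complex.I * (((r0.1 : ℝ) * p.1 + (r0.2 : ℝ) * p.2 : ℝ) : ℂ)) with hG0def
  set G1 : ℝ × ℝ → ℂ :=
    fun p => Complex.exp (Complex.I * (((r0.1 : ℝ) * p.1 : ℝ) : ℂ)) with hG1def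
  set G2 : ℝ × ℝ → ℂ :=
    fun p => Complex.exp (Complex.I * (((r0.2 : ℝ) * p.2 : ℝ) : ℂ)) with hG2def
  have hG0c : Continuous G0 := by
    apply Complex.continuous_exp.comp
    exact continuous_const.mul (Complex.continuous_ofReal.comp
      (((continuous_const.mul continuous_fst).add (continuous_const.mul continuous_snd))))
  have hG1c : Continuous G1 := by
    apply Complex.continuous_exp.comp
    exact continuous_const.mul (Complex.continuous_ofReal.comp
      (continuous_const.mul continuous_fst))
  have hG2c : Continuous G2 := by
    apply Complex.continuous_exp.comp
    exact continuous_const.mul (Complex.continuous_ofReal.comp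
      (continuous_const.mul continuous_snd))
  have hG0b : ∀ p, ‖G0 p‖ ≤ 1 := fun p => le_of_eq (TnwAux.norm_expI _)
  have hG1b : ∀ p, ‖G1 p‖ ≤ 1 := fun p => le_of_eq (TnwAux.norm_expI _)
  have hG2b : ∀ p, ‖G2 p‖ ≤ 1 := fun p => le_of_eq (TnwAux.norm_expI _)
  have A0 := TnwAux.slln_exp μ Θ hΘmeas hiid hident0 G0 hG0c.measurable hG0b
  have A1 := TnwAux.slln_exp μ Θ hΘmeas hiid hident0 G1 hG1c.measurable hG1b
  have A2 := TnwAux.slln_exp μ Θ hΘmeas hiid hident0 G2 hG2c.measurable hG2b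
  have e0 : ∫ ω', G0 (Θ 0 ω') ∂μ =
      ∫ ω, Complex.exp (Complex.I * (((r0.1 : ℝ) * θ1 ω + (r0.2 : ℝ) * θ2 ω : ℝ) : ℂ)) ∂μ :=
    ((hident 0).comp hG0c.measurable).integral_eq
  have e1 : ∫ ω', G1 (Θ 0 ω') ∂μ =
      ∫ ω, Complex.exp (Complex.I * (((r0.1 : ℝ) * θ1 ω : ℝ) : ℂ)) ∂μ :=
    ((hident 0).comp hG1c.measurable).integral_eq
  have e2 : ∫ ω', G2 (Θ 0 ω') ∂μ =
      ∫ ω, Complex.exp (Complex.I * (((r0.2 : ℝ) * θ2 ω : ℝ) : ℂ)) ∂μ :=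
    ((hident 0).comp hG2c.measurable).integral_eq
  filter_upwards [A0, A1, A2] with ω h0 h1 h2
  set a : ℕ → ℝ := fun i => (Θ i ω).1 with hadef
  set b : ℕ → ℝ := fun i => (Θ i ω).2 with hbdef
  have hDlim : Tendsto (fun n : ℕ => ecfD n a b r0) atTop (𝓝 c) := by
    have hfe : (fun n : ℕ => ecfD n a b r0) =
        (fun n : ℕ => ((n : ℂ)⁻¹ * ∑ j ∈ Finset.range n, G0 (Θ j ω)) -
          ((n : ℂ)⁻¹ * ∑ j ∈ Finset.range n, G1 (Θ j ω)) *
          ((n : ℂ)⁻¹ * ∑ j ∈ Finset.range n, G2 (Θ j ω))) := rfl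
    rw [hfe, hcdef, ← e0, ← e1, ← e2]
    exact h0.sub (h1.mul h2)
  have hnorm : Tendsto (fun n : ℕ => ‖ecfD n a b r0‖ ^ 2 * w r0) atTop
      (𝓝 (‖c‖ ^ 2 * w r0)) := (hDlim.norm.pow 2).mul_const (w r0)
  have hLpos : 0 < ‖c‖ ^ 2 * w r0 := mul_pos (pow_pos (norm_pos_iff.mpr hc) 2) (hw r0)
  have hev : ∀ᶠ n in atTop, ‖c‖ ^ 2 * w r0 / 2 ≤ ‖ecfD n a b r0‖ ^ 2 * w r0 :=
    hnorm.eventually (eventually_ge_nhds (by linarith))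
  have hsummable : ∀ n : ℕ, Summable (fun ρ : ℤ × ℤ => ‖ecfD n a b ρ‖ ^ 2 * w ρ) := fun n =>
    Summable.of_nonneg_of_le (fun ρ => mul_nonneg (by positivity) (hw ρ).le)
      (fun ρ => by
        have hb := TnwAux.norm_ecfD_le n a b ρ
        have h4 : ‖ecfD n a b ρ‖ ^ 2 ≤ 4 := by nlinarith [norm_nonneg (ecfD n a b ρ)]
        exact mul_le_mul_of_nonneg_right h4 (hw ρ).le)
      (hsum.mul_left 4)
  refine tendsto_atTop_mono' atTop ?_
    (Filter.Tendsto.atTop_mul_const (r := ‖c‖ ^ 2 * w r0 / 2) (by linarith)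
      tendsto_natCast_atTop_atTop)
  filter_upwards [hev] with n hn
  have hterm : ‖c‖ ^ 2 * w r0 / 2 ≤ ∑' ρ : ℤ × ℤ, ‖ecfD n a b ρ‖ ^ 2 * w ρ :=
    hn.trans (Summable.le_tsum (hsummable n) r0 fun ρ _ => mul_nonneg (by positivity) (hw ρ).le)
  exact mul_le_mul_of_nonneg_left hterm (Nat.cast_nonneg n)
end

section
/- Let v : ℤ → [0,∞) be symmetric about zero (v(−r) = v(r)) with Σ_{r∈ℤ} v(r) < ∞, and set w(r₁,r₂) := v(r₁)v(r₂) and J_c^{(v)}(θ) := Σ_{r∈ℤ} cos(rθ) v(r). Then, for any real numbers θ¹₁,…,θ¹ₙ and θ²₁,…,θ²ₙ and with θ^{(m)}_{jk} := θ^{(m)}_j − θ^{(m)}_k, the statistic T_{n,w} := n Σ_{(r₁,r₂)∈ℤ²} |D^{(n)}(r₁,r₂)|² w(r₁,r₂) satisfies T_{n,w} = (1/n) Σ_{j,k=1}^{n} J_c^{(v)}(θ¹_{jk}) J_c^{(v)}(θ²_{jk}) + (1/n³) [Σ_{j,k=1}^{n} J_c^{(v)}(θ¹_{jk})] [Σ_{j,k=1}^{n}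 J_c^{(v)}(θ²_{jk})] − (2/n²) Σ_{j,k,ℓ=1}^{n} J_c^{(v)}(θ¹_{jk}) J_c^{(v)}(θ²_{jℓ}). -/
open scoped BigOperators

/-- The kernel `J_c^{(v)}(θ) = Σ_{r∈ℤ} cos(rθ) v(r)`. -/
noncomputable def Jv (v : ℤ → ℝ) (θ : ℝ) : ℝ :=
  ∑' r : ℤ, Real.cos ((r : ℝ) * θ) * v r

/-! ### Auxiliary definitions and lemmas -/

/-- `f1 v θ r = e^{i r θ} v(r)`. -/
noncomputable def f1 (v : ℤ → ℝ) (θ : ℝ) (r : ℤ) : ℂ :=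
  Complex.exp (Complex.I * (((r : ℝ) * θ : ℝ) : ℂ)) * (v r : ℂ)

lemma norm_f1 (v : ℤ → ℝ) (hv0 : ∀ r, 0 ≤ v r) (θ : ℝ) (r : ℤ) : ‖f1 v θ r‖ = v r := by
  rw [f1, norm_mul, mul_comm Complex.I, Complex.norm_exp_ofReal_mul_I,
    one_mul, Complex.norm_real, Real.norm_eq_abs, _root_.abs_of_nonneg (hv0 r)]

lemma expE (x y : ℝ) :
    Complex.exp (Complex.I * (x : ℂ)) * (starRingEnd ℂ) (Complex.exp (Complex.I * (y : ℂ))) =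
      Complex.exp (Complex.I * ((x - y : ℝ) : ℂ)) := by
  rw [← Complex.exp_conj, ← Complex.exp_add]
  congr 1
  simp only [map_mul, Complex.conj_I, Complex.conj_ofReal]
  push_cast
  ring

lemma expE2 (x y : ℝ) :
    (starRingEnd ℂ) (Complex.exp (Complex.I * (x : ℂ))) * Complex.exp (Complex.I * (y : ℂ)) =
      Complex.exp (Complex.I * ((y - x : ℝ) : ℂ)) := by
  rw [mul_comm, expE]

lemma expadd (x y : ℝ) :
    Complex.exp (Complex.I * (x : ℂ)) * Complex.exp (Complex.I * (y : ℂ)) =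
      Complex.exp (Complex.I * ((x + y : ℝ) : ℂ)) := by
  rw [← Complex.exp_add]
  congr 1
  push_cast
  ring

lemma exp_add_exp_neg (x : ℝ) :
    Complex.exp (Complex.I * (x : ℂ)) + Complex.exp (Complex.I * ((-x : ℝ) : ℂ))
      = 2 * ((Real.cos x : ℝ) : ℂ) := by
  rw [mul_comm Complex.I, mul_comm Complex.I, Complex.exp_mul_I, Complex.exp_mul_I]
  push_cast
  simp [Complex.cos_neg, Complex.sin_neg, ← Complex.ofReal_cos]
  ring

lemma norm_sq_coe (z : ℂ) : ((‖z‖ ^ 2 : ℝ) : ℂ) = z * (starRingEnd ℂ) z := by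
  rw [Complex.mul_conj]
  norm_cast
  rw [Complex.normSq_eq_norm_sq]

lemma mul_f1 (v : ℤ → ℝ) (s t : ℝ) (r1 r2 : ℤ) :
    Complex.exp (Complex.I * (((r1 : ℝ) * s + (r2 : ℝ) * t : ℝ) : ℂ)) * ((v r1 : ℂ) * (v r2 : ℂ))
      = f1 v s r1 * f1 v t r2 := by
  rw [f1, f1, Complex.ofReal_add, mul_add, Complex.exp_add]
  ring

section kernel
variable {v : ℤ → ℝ}

lemma f1_norm_summable (hv0 : ∀ r, 0 ≤ v r) (hvsum : Summable v) (θ : ℝ) :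
    Summable (fun r => ‖f1 v θ r‖) :=
  hvsum.congr fun r => (norm_f1 v hv0 θ r).symm

lemma f1_summable (hv0 : ∀ r, 0 ≤ v r) (hvsum : Summable v) (θ : ℝ) : Summable (f1 v θ) :=
  (f1_norm_summable hv0 hvsum θ).of_norm

lemma cosv_summable (hv0 : ∀ r, 0 ≤ v r) (hvsum : Summable v) (θ : ℝ) :
    Summable (fun r : ℤ => Real.cos ((r : ℝ) * θ) * v r) := by
  apply Summable.of_norm_bounded (g := v) hvsum
  intro r
  rw [Real.norm_eq_abs, abs_mul, _root_.abs_of_nonneg (hv0 r)]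
  exact mul_le_of_le_one_left (hv0 r) (Real.abs_cos_le_one _)

lemma tsum_f1 (hv0 : ∀ r, 0 ≤ v r) (hvsym : ∀ r : ℤ, v (-r) = v r) (hvsum : Summable v)
    (θ : ℝ) : ∑' r : ℤ, f1 v θ r = ((Jv v θ : ℝ) : ℂ) := by
  have hs := f1_summable hv0 hvsum θ
  have hsneg : Summable (fun r : ℤ => f1 v θ (-r)) :=
    hs.comp_injective neg_injective
  have h2 : (2 : ℂ) * ∑' r : ℤ, f1 v θ r
      = ∑' r : ℤ, (f1 v θ r + f1 v θ (-r)) := by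
    rw [Summable.tsum_add hs hsneg]
    have : ∑' r : ℤ, f1 v θ (-r) = ∑' r : ℤ, f1 v θ r := (Equiv.neg ℤ).tsum_eq (f1 v θ)
    rw [this]; ring
  have hpt : ∀ r : ℤ, f1 v θ r + f1 v θ (-r)
      = 2 * ((Real.cos ((r : ℝ) * θ) * v r : ℝ) : ℂ) := by
    intro r
    have h1 : ((((-r : ℤ) : ℝ) * θ : ℝ)) = -(((r : ℝ) * θ)) := by push_cast; ring
    have h4 := exp_add_exp_neg ((r : ℝ) * θ)
    rw [f1, f1, hvsym, h1]
    calc Complex.exp (Complex.I * (((r : ℝ) * θ : ℝ) : ℂ)) * ((v r : ℝ) : ℂ)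
          + Complex.exp (Complex.I * ((-((r : ℝ) * θ) : ℝ) : ℂ)) * ((v r : ℝ) : ℂ)
        = (Complex.exp (Complex.I * (((r : ℝ) * θ : ℝ) : ℂ))
            + Complex.exp (Complex.I * ((-((r : ℝ) * θ) : ℝ) : ℂ))) * ((v r : ℝ) : ℂ) := by ring
      _ = 2 * ((Real.cos ((r : ℝ) * θ) * v r : ℝ) : ℂ) := by rw [h4]; push_cast; ring
  rw [tsum_congr hpt] at h2
  rw [tsum_mul_left] at h2
  have h3 : ∑' r : ℤ, ((Real.cos ((r : ℝ) * θ) * v r : ℝ) : ℂ) = ((Jv v θ : ℝ) : ℂ) := by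
    rw [Jv, Complex.ofReal_tsum]
  rw [h3] at h2
  exact mul_left_cancel₀ two_ne_zero h2

lemma prod_f1_summable (hv0 : ∀ r, 0 ≤ v r) (hvsum : Summable v) (α β : ℝ) :
    Summable (fun p : ℤ × ℤ => f1 v α p.1 * f1 v β p.2) :=
  summable_mul_of_summable_norm (f1_norm_summable hv0 hvsum α) (f1_norm_summable hv0 hvsum β)

lemma tsum_prod_f1 (hv0 : ∀ r, 0 ≤ v r) (hvsym : ∀ r : ℤ, v (-r) = v r) (hvsum : Summable v)
    (α β : ℝ) :
    ∑' p : ℤ × ℤ, f1 v α p.1 * f1 v β p.2 = ((Jv v α : ℝ) : ℂ) * ((Jv v β : ℝ) : ℂ) := by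
  rw [← tsum_mul_tsum_of_summable_norm (f1_norm_summable hv0 hvsum α)
    (f1_norm_summable hv0 hvsum β),
    tsum_f1 hv0 hvsym hvsum, tsum_f1 hv0 hvsym hvsum]

lemma Jv_even (v : ℤ → ℝ) (θ : ℝ) : Jv v (-θ) = Jv v θ := by
  unfold Jv
  congr 1
  funext r
  rw [mul_neg, Real.cos_neg]

end kernel

lemma sum3_comm {M : Type*} [AddCommMonoid M] (s t u : Finset ℕ) (g : ℕ → ℕ → ℕ → M) :
    ∑ j ∈ s, ∑ k ∈ t, ∑ l ∈ u, g j k l = ∑ l ∈ u, ∑ k ∈ t, ∑ j ∈ s, g j k l :=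
  calc ∑ j ∈ s, ∑ k ∈ t, ∑ l ∈ u, g j k l
      = ∑ j ∈ s, ∑ l ∈ u, ∑ k ∈ t, g j k l :=
        Finset.sum_congr rfl fun j _ => Finset.sum_comm
    _ = ∑ l ∈ u, ∑ j ∈ s, ∑ k ∈ t, g j k l := Finset.sum_comm
    _ = ∑ l ∈ u, ∑ k ∈ t, ∑ j ∈ s, g j k l :=
        Finset.sum_congr rfl fun l _ => Finset.sum_comm

lemma ecfD_expand (v : ℤ → ℝ) (n : ℕ) (a b : ℕ → ℝ) (p : ℤ × ℤ) :
    ((‖ecfD n a b p‖ ^ 2 : ℝ) : ℂ) * ((v p.1 : ℂ) * (v p.2 : ℂ))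
      = ((n : ℂ)⁻¹) ^ 2 * ∑ j ∈ Finset.range n, ∑ k ∈ Finset.range n,
            f1 v (a j - a k) p.1 * f1 v (b j - b k) p.2
        + ((n : ℂ)⁻¹) ^ 4 * ((∑ j ∈ Finset.range n, ∑ k ∈ Finset.range n, f1 v (a j - a k) p.1)
            * (∑ j ∈ Finset.range n, ∑ k ∈ Finset.range n, f1 v (b j - b k) p.2))
        - ((n : ℂ)⁻¹) ^ 3 * ∑ j ∈ Finset.range n, ∑ k ∈ Finset.range n, ∑ l ∈ Finset.range n,
            f1 v (a j - a k) p.1 * f1 v (b j - b l) p.2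
        - ((n : ℂ)⁻¹) ^ 3 * ∑ j ∈ Finset.range n, ∑ k ∈ Finset.range n, ∑ l ∈ Finset.range n,
            f1 v (a k - a j) p.1 * f1 v (b l - b j) p.2 := by
  obtain ⟨r1, r2⟩ := p
  set A := ∑ j ∈ Finset.range n, Complex.exp (Complex.I * (((r1 : ℝ) * a j + (r2 : ℝ) * b j : ℝ) : ℂ)) with hA
  set B := ∑ j ∈ Finset.range n, Complex.exp (Complex.I * (((r1 : ℝ) * a j : ℝ) : ℂ)) with hB
  set C := ∑ j ∈ Finset.range n, Complex.exp (Complex.I * (((r2 : ℝ) * b j : ℝ) : ℂ)) with hC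
  have hD : ecfD n a b (r1, r2) = (n : ℂ)⁻¹ * A - ((n : ℂ)⁻¹ * B) * ((n : ℂ)⁻¹ * C) := rfl
  have key : ((‖ecfD n a b (r1, r2)‖ ^ 2 : ℝ) : ℂ) * ((v r1 : ℂ) * (v r2 : ℂ))
      = ((n : ℂ)⁻¹) ^ 2 * (A * (starRingEnd ℂ) A * ((v r1 : ℂ) * (v r2 : ℂ)))
        + ((n : ℂ)⁻¹) ^ 4 * ((B * (starRingEnd ℂ) B * (v r1 : ℂ)) * (C * (starRingEnd ℂ) C * (v r2 : ℂ)))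
        - ((n : ℂ)⁻¹) ^ 3 * (A * (starRingEnd ℂ) B * (starRingEnd ℂ) C * ((v r1 : ℂ) * (v r2 : ℂ)))
        - ((n : ℂ)⁻¹) ^ 3 * ((starRingEnd ℂ) A * B * C * ((v r1 : ℂ) * (v r2 : ℂ))) := by
    rw [norm_sq_coe, hD]
    simp only [map_sub, map_mul, map_inv₀, Complex.conj_natCast]
    ring
  rw [key]
  have hAA : A * (starRingEnd ℂ) A * ((v r1 : ℂ) * (v r2 : ℂ))
      = ∑ j ∈ Finset.range n, ∑ k ∈ Finset.range n,
          f1 v (a j - a k) r1 * f1 v (b j - b k) r2 := by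
    rw [hA]
    conv_rhs => rw [Finset.sum_comm]
    simp only [map_sum, Finset.sum_mul_sum, Finset.sum_mul, Finset.mul_sum]
    refine Finset.sum_congr rfl fun j _ => Finset.sum_congr rfl fun k _ => ?_
    rw [expE]
    have harg : ((r1 : ℝ) * a k + (r2 : ℝ) * b k) - ((r1 : ℝ) * a j + (r2 : ℝ) * b j)
        = (r1 : ℝ) * (a k - a j) + (r2 : ℝ) * (b k - b j) := by ring
    rw [harg, mul_f1]
  have hBB : B * (starRingEnd ℂ) B * ((v r1 : ℝ) : ℂ)
      = ∑ j ∈ Finset.range n, ∑ k ∈ Finset.range n, f1 v (a j - a k) r1 := by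
    rw [hB]
    conv_rhs => rw [Finset.sum_comm]
    simp only [map_sum, Finset.sum_mul_sum, Finset.sum_mul, Finset.mul_sum]
    refine Finset.sum_congr rfl fun j _ => Finset.sum_congr rfl fun k _ => ?_
    rw [expE]
    have harg : (r1 : ℝ) * a k - (r1 : ℝ) * a j = (r1 : ℝ) * (a k - a j) := by ring
    rw [harg, f1]
  have hCC : C * (starRingEnd ℂ) C * ((v r2 : ℝ) : ℂ)
      = ∑ j ∈ Finset.range n, ∑ k ∈ Finset.range n, f1 v (b j - b k) r2 := by
    rw [hC]
    conv_rhs => rw [Finset.sum_comm]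
    simp only [map_sum, Finset.sum_mul_sum, Finset.sum_mul, Finset.mul_sum]
    refine Finset.sum_congr rfl fun j _ => Finset.sum_congr rfl fun k _ => ?_
    rw [expE]
    have harg : (r2 : ℝ) * b k - (r2 : ℝ) * b j = (r2 : ℝ) * (b k - b j) := by ring
    rw [harg, f1]
  have hABC : A * (starRingEnd ℂ) B * (starRingEnd ℂ) C * ((v r1 : ℂ) * (v r2 : ℂ))
      = ∑ j ∈ Finset.range n, ∑ k ∈ Finset.range n, ∑ l ∈ Finset.range n,
          f1 v (a j - a k) r1 * f1 v (b j - b l) r2 := by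
    rw [hA, hB, hC]
    rw [sum3_comm]
    simp only [map_sum, Finset.sum_mul_sum, Finset.sum_mul, Finset.mul_sum]
    refine Finset.sum_congr rfl fun j _ => Finset.sum_congr rfl fun k _ =>
      Finset.sum_congr rfl fun l _ => ?_
    rw [expE, expE]
    have harg : (((r1 : ℝ) * a l + (r2 : ℝ) * b l) - (r1 : ℝ) * a k) - (r2 : ℝ) * b j
        = (r1 : ℝ) * (a l - a k) + (r2 : ℝ) * (b l - b j) := by ring
    rw [harg, mul_f1]
  have hA'BC : (starRingEnd ℂ) A * B * C * ((v r1 : ℂ) * (v r2 : ℂ))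
      = ∑ j ∈ Finset.range n, ∑ k ∈ Finset.range n, ∑ l ∈ Finset.range n,
          f1 v (a k - a j) r1 * f1 v (b l - b j) r2 := by
    rw [hA, hB, hC]
    rw [sum3_comm]
    simp only [map_sum, Finset.sum_mul_sum, Finset.sum_mul, Finset.mul_sum]
    refine Finset.sum_congr rfl fun j _ => Finset.sum_congr rfl fun k _ =>
      Finset.sum_congr rfl fun l _ => ?_
    rw [expE2, expadd]
    have harg : ((r1 : ℝ) * a k - ((r1 : ℝ) * a l + (r2 : ℝ) * b l)) + (r2 : ℝ) * b j
        = (r1 : ℝ) * (a k - a l) + (r2 : ℝ) * (b j - b l) := by ring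
    rw [harg, mul_f1]
  rw [hAA, hBB, hCC, hABC, hA'BC]

lemma norm_avg_exp_le (n : ℕ) (x : ℕ → ℝ) :
    ‖(n : ℂ)⁻¹ * ∑ j ∈ Finset.range n, Complex.exp (Complex.I * ((x j : ℝ) : ℂ))‖ ≤ 1 := by
  rw [norm_mul, norm_inv, Complex.norm_natCast]
  have h1 : ‖∑ j ∈ Finset.range n, Complex.exp (Complex.I * ((x j : ℝ) : ℂ))‖ ≤ (n : ℝ) := by
    refine le_trans (norm_sum_le _ _) ?_
    have : ∀ j, ‖Complex.exp (Complex.I * ((x j : ℝ) : ℂ))‖ = 1 := fun j => by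
      rw [mul_comm, Complex.norm_exp_ofReal_mul_I]
    simp [this]
  rcases Nat.eq_zero_or_pos n with h | h
  · simp [h]
  · have hn : (0 : ℝ) < n := by exact_mod_cast h
    calc ((n : ℝ))⁻¹ * ‖∑ j ∈ Finset.range n, Complex.exp (Complex.I * ((x j : ℝ) : ℂ))‖
        ≤ (n : ℝ)⁻¹ * n := by
          exact mul_le_mul_of_nonneg_left h1 (by positivity)
      _ = 1 := by field_simp

lemma norm_ecfD_le (n : ℕ) (a b : ℕ → ℝ) (p : ℤ × ℤ) : ‖ecfD n a b p‖ ≤ 2 := by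
  rw [ecfD]
  refine le_trans (norm_sub_le _ _) ?_
  have h1 := norm_avg_exp_le n (fun j => (p.1 : ℝ) * a j + (p.2 : ℝ) * b j)
  have h2 := norm_avg_exp_le n (fun j => (p.1 : ℝ) * a j)
  have h3 := norm_avg_exp_le n (fun j => (p.2 : ℝ) * b j)
  have h4 : ‖((n : ℂ)⁻¹ * ∑ j ∈ Finset.range n, Complex.exp (Complex.I * (((p.1 : ℝ) * a j : ℝ) : ℂ)))
      * ((n : ℂ)⁻¹ * ∑ j ∈ Finset.range n, Complex.exp (Complex.I * (((p.2 : ℝ) * b j : ℝ) : ℂ)))‖ ≤ 1 := by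
    rw [norm_mul]
    exact mul_le_one₀ h2 (norm_nonneg _) h3
  linarith

/-- Closed form of the statistic `T_{n,w}` for a product weight `w(r₁,r₂) = v(r₁)v(r₂)` with
`v` nonnegative, summable and symmetric about zero, in terms of the kernel `J_c^{(v)}` of
pairwise differences of the sample. -/
theorem Tnw_closed_form
    (v : ℤ → ℝ) (hv0 : ∀ r, 0 ≤ v r) (hvsym : ∀ r : ℤ, v (-r) = v r)
    (hvsum : Summable v) (n : ℕ) (hn : 0 < n) (a b : ℕ → ℝ) :
    (n : ℝ) * ∑' r : ℤ × ℤ, ‖ecfD n a b r‖ ^ 2 * (v r.1 * v r.2)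
      = (1 / (n : ℝ)) * ∑ j ∈ Finset.range n, ∑ k ∈ Finset.range n,
            Jv v (a j - a k) * Jv v (b j - b k)
        + (1 / (n : ℝ) ^ 3)
            * (∑ j ∈ Finset.range n, ∑ k ∈ Finset.range n, Jv v (a j - a k))
            * (∑ j ∈ Finset.range n, ∑ k ∈ Finset.range n, Jv v (b j - b k))
        - (2 / (n : ℝ) ^ 2) * ∑ j ∈ Finset.range n, ∑ k ∈ Finset.range n,
            ∑ l ∈ Finset.range n, Jv v (a j - a k) * Jv v (b j - b l) := by
  have hprod := prod_f1_summable hv0 hvsum (v := v)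
  have hmaster := tsum_prod_f1 hv0 hvsym hvsum (v := v)
  -- summabilities of the four pieces
  have s1 : Summable (fun p : ℤ × ℤ => ∑ j ∈ Finset.range n, ∑ k ∈ Finset.range n,
      f1 v (a j - a k) p.1 * f1 v (b j - b k) p.2) :=
    summable_sum fun j _ => summable_sum fun k _ => hprod _ _
  have s2 : Summable (fun p : ℤ × ℤ =>
      (∑ j ∈ Finset.range n, ∑ k ∈ Finset.range n, f1 v (a j - a k) p.1)
        * (∑ j ∈ Finset.range n, ∑ k ∈ Finset.range n, f1 v (b j - b k) p.2)) := by
    have heq : ∀ p : ℤ × ℤ,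
        (∑ j ∈ Finset.range n, ∑ k ∈ Finset.range n, f1 v (a j - a k) p.1)
          * (∑ j ∈ Finset.range n, ∑ k ∈ Finset.range n, f1 v (b j - b k) p.2)
        = ∑ j ∈ Finset.range n, ∑ k ∈ Finset.range n, ∑ j' ∈ Finset.range n,
            ∑ k' ∈ Finset.range n, f1 v (a j' - a k') p.1 * f1 v (b j - b k) p.2 := by
      intro p
      simp only [Finset.sum_mul, Finset.mul_sum]
    exact Summable.congr (summable_sum fun j _ => summable_sum fun k _ =>
      summable_sum fun j' _ => summable_sum fun k' _ => hprod _ _) fun p => (heq p).symm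
  have s3 : Summable (fun p : ℤ × ℤ => ∑ j ∈ Finset.range n, ∑ k ∈ Finset.range n,
      ∑ l ∈ Finset.range n, f1 v (a j - a k) p.1 * f1 v (b j - b l) p.2) :=
    summable_sum fun j _ => summable_sum fun k _ => summable_sum fun l _ => hprod _ _
  have s4 : Summable (fun p : ℤ × ℤ => ∑ j ∈ Finset.range n, ∑ k ∈ Finset.range n,
      ∑ l ∈ Finset.range n, f1 v (a k - a j) p.1 * f1 v (b l - b j) p.2) :=
    summable_sum fun j _ => summable_sum fun k _ => summable_sum fun l _ => hprod _ _
  -- values of the four tsums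
  have ht1 : ∑' p : ℤ × ℤ, (∑ j ∈ Finset.range n, ∑ k ∈ Finset.range n,
      f1 v (a j - a k) p.1 * f1 v (b j - b k) p.2)
      = ∑ j ∈ Finset.range n, ∑ k ∈ Finset.range n,
          ((Jv v (a j - a k) : ℝ) : ℂ) * ((Jv v (b j - b k) : ℝ) : ℂ) := by
    rw [Summable.tsum_finsetSum fun j _ => summable_sum fun k _ => hprod _ _]
    refine Finset.sum_congr rfl fun j _ => ?_
    rw [Summable.tsum_finsetSum fun k _ => hprod _ _]
    exact Finset.sum_congr rfl fun k _ => hmaster _ _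
  have htF : ∑' r1 : ℤ, (∑ j ∈ Finset.range n, ∑ k ∈ Finset.range n, f1 v (a j - a k) r1)
      = ∑ j ∈ Finset.range n, ∑ k ∈ Finset.range n, ((Jv v (a j - a k) : ℝ) : ℂ) := by
    rw [Summable.tsum_finsetSum fun j _ => summable_sum fun k _ => f1_summable hv0 hvsum _]
    refine Finset.sum_congr rfl fun j _ => ?_
    rw [Summable.tsum_finsetSum fun k _ => f1_summable hv0 hvsum _]
    exact Finset.sum_congr rfl fun k _ => tsum_f1 hv0 hvsym hvsum _
  have htG : ∑' r2 : ℤ, (∑ j ∈ Finset.range n, ∑ k ∈ Finset.range n, f1 v (b j - b k) r2)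
      = ∑ j ∈ Finset.range n, ∑ k ∈ Finset.range n, ((Jv v (b j - b k) : ℝ) : ℂ) := by
    rw [Summable.tsum_finsetSum fun j _ => summable_sum fun k _ => f1_summable hv0 hvsum _]
    refine Finset.sum_congr rfl fun j _ => ?_
    rw [Summable.tsum_finsetSum fun k _ => f1_summable hv0 hvsum _]
    exact Finset.sum_congr rfl fun k _ => tsum_f1 hv0 hvsym hvsum _
  have ht2 : ∑' p : ℤ × ℤ,
      ((∑ j ∈ Finset.range n, ∑ k ∈ Finset.range n, f1 v (a j - a k) p.1)
        * (∑ j ∈ Finset.range n, ∑ k ∈ Finset.range n, f1 v (b j - b k) p.2))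
      = (∑ j ∈ Finset.range n, ∑ k ∈ Finset.range n, ((Jv v (a j - a k) : ℝ) : ℂ))
        * (∑ j ∈ Finset.range n, ∑ k ∈ Finset.range n, ((Jv v (b j - b k) : ℝ) : ℂ)) := by
    rw [← Summable.tsum_mul_tsum (summable_sum fun j _ => summable_sum fun k _ => f1_summable hv0 hvsum _)
      (summable_sum fun j _ => summable_sum fun k _ => f1_summable hv0 hvsum _) s2, htF, htG]
  have ht3 : ∑' p : ℤ × ℤ, (∑ j ∈ Finset.range n, ∑ k ∈ Finset.range n,
      ∑ l ∈ Finset.range n, f1 v (a j - a k) p.1 * f1 v (b j - b l) p.2)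
      = ∑ j ∈ Finset.range n, ∑ k ∈ Finset.range n, ∑ l ∈ Finset.range n,
          ((Jv v (a j - a k) : ℝ) : ℂ) * ((Jv v (b j - b l) : ℝ) : ℂ) := by
    rw [Summable.tsum_finsetSum fun j _ => summable_sum fun k _ => summable_sum fun l _ => hprod _ _]
    refine Finset.sum_congr rfl fun j _ => ?_
    rw [Summable.tsum_finsetSum fun k _ => summable_sum fun l _ => hprod _ _]
    refine Finset.sum_congr rfl fun k _ => ?_
    rw [Summable.tsum_finsetSum fun l _ => hprod _ _]
    exact Finset.sum_congr rfl fun l _ => hmaster _ _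
  have ht4 : ∑' p : ℤ × ℤ, (∑ j ∈ Finset.range n, ∑ k ∈ Finset.range n,
      ∑ l ∈ Finset.range n, f1 v (a k - a j) p.1 * f1 v (b l - b j) p.2)
      = ∑ j ∈ Finset.range n, ∑ k ∈ Finset.range n, ∑ l ∈ Finset.range n,
          ((Jv v (a j - a k) : ℝ) : ℂ) * ((Jv v (b j - b l) : ℝ) : ℂ) := by
    rw [Summable.tsum_finsetSum fun j _ => summable_sum fun k _ => summable_sum fun l _ => hprod _ _]
    refine Finset.sum_congr rfl fun j _ => ?_
    rw [Summable.tsum_finsetSum fun k _ => summable_sum fun l _ => hprod _ _]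
    refine Finset.sum_congr rfl fun k _ => ?_
    rw [Summable.tsum_finsetSum fun l _ => hprod _ _]
    refine Finset.sum_congr rfl fun l _ => ?_
    rw [hmaster _ _]
    have e1 : Jv v (a k - a j) = Jv v (a j - a k) := by
      rw [show a k - a j = -(a j - a k) by ring, Jv_even]
    have e2 : Jv v (b l - b j) = Jv v (b j - b l) := by
      rw [show b l - b j = -(b j - b l) by ring, Jv_even]
    rw [e1, e2]
  -- the complex-valued tsum
  have hsplit : ∑' p : ℤ × ℤ, ((‖ecfD n a b p‖ ^ 2 : ℝ) : ℂ) * ((v p.1 : ℂ) * (v p.2 : ℂ))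
      = ((n : ℂ)⁻¹) ^ 2 * (∑ j ∈ Finset.range n, ∑ k ∈ Finset.range n,
            ((Jv v (a j - a k) : ℝ) : ℂ) * ((Jv v (b j - b k) : ℝ) : ℂ))
        + ((n : ℂ)⁻¹) ^ 4 * ((∑ j ∈ Finset.range n, ∑ k ∈ Finset.range n,
              ((Jv v (a j - a k) : ℝ) : ℂ))
            * (∑ j ∈ Finset.range n, ∑ k ∈ Finset.range n, ((Jv v (b j - b k) : ℝ) : ℂ)))
        - ((n : ℂ)⁻¹) ^ 3 * (∑ j ∈ Finset.range n, ∑ k ∈ Finset.range n,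
            ∑ l ∈ Finset.range n, ((Jv v (a j - a k) : ℝ) : ℂ) * ((Jv v (b j - b l) : ℝ) : ℂ))
        - ((n : ℂ)⁻¹) ^ 3 * (∑ j ∈ Finset.range n, ∑ k ∈ Finset.range n,
            ∑ l ∈ Finset.range n, ((Jv v (a j - a k) : ℝ) : ℂ) * ((Jv v (b j - b l) : ℝ) : ℂ)) := by
    rw [tsum_congr (fun p => ecfD_expand v n a b p)]
    rw [Summable.tsum_sub (((s1.mul_left _).add (s2.mul_left _)).sub (s3.mul_left _)) (s4.mul_left _),
      Summable.tsum_sub ((s1.mul_left _).add (s2.mul_left _)) (s3.mul_left _),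
      Summable.tsum_add (s1.mul_left _) (s2.mul_left _),
      tsum_mul_left, tsum_mul_left, tsum_mul_left, tsum_mul_left, ht1, ht2, ht3, ht4]
  -- summability of the real summand
  have hgs : Summable (fun r : ℤ × ℤ => ‖ecfD n a b r‖ ^ 2 * (v r.1 * v r.2)) := by
    apply Summable.of_norm_bounded (g := fun p : ℤ × ℤ => 4 * (v p.1 * v p.2))
      (((hvsum.mul_of_nonneg hvsum hv0 hv0)).mul_left 4)
    intro p
    have h0 : (0 : ℝ) ≤ v p.1 * v p.2 := mul_nonneg (hv0 _) (hv0 _)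
    rw [Real.norm_eq_abs, _root_.abs_of_nonneg (by positivity)]
    have h2 : ‖ecfD n a b p‖ ^ 2 ≤ 4 := by
      have := norm_ecfD_le n a b p
      nlinarith [norm_nonneg (ecfD n a b p)]
    exact mul_le_mul_of_nonneg_right h2 h0 |>.trans_eq rfl
  -- pass to ℂ and conclude
  have hnne : ((n : ℂ)) ≠ 0 := by exact_mod_cast Nat.pos_iff_ne_zero.mp hn
  apply Complex.ofReal_injective
  push_cast [Complex.ofReal_tsum]
  calc (n : ℂ) * ∑' p : ℤ × ℤ, ((‖ecfD n a b p‖ : ℂ) ^ 2 * ((v p.1 : ℂ) * (v p.2 : ℂ)))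
      = (n : ℂ) * ∑' p : ℤ × ℤ, ((‖ecfD n a b p‖ ^ 2 : ℝ) : ℂ) * ((v p.1 : ℂ) * (v p.2 : ℂ)) := by
        norm_cast
    _ = _ := by
        rw [hsplit]
        set X1 := ∑ j ∈ Finset.range n, ∑ k ∈ Finset.range n,
          ((Jv v (a j - a k) : ℝ) : ℂ) * ((Jv v (b j - b k) : ℝ) : ℂ) with hX1
        set XA := ∑ j ∈ Finset.range n, ∑ k ∈ Finset.range n, ((Jv v (a j - a k) : ℝ) : ℂ) with hXA
        set XB := ∑ j ∈ Finset.range n, ∑ k ∈ Finset.range n, ((Jv v (b j - b k) : ℝ) : ℂ) with hXB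
        set X3 := ∑ j ∈ Finset.range n, ∑ k ∈ Finset.range n, ∑ l ∈ Finset.range n,
          ((Jv v (a j - a k) : ℝ) : ℂ) * ((Jv v (b j - b l) : ℝ) : ℂ) with hX3
        have hkey : ((n : ℂ))⁻¹ * (n : ℂ) = 1 := inv_mul_cancel₀ hnne
        have hkey12 : ((n : ℂ)⁻¹) ^ 12 * (n : ℂ) ^ 12 = 1 := by
          rw [← mul_pow, hkey, one_pow]
        field_simp
        ring
end
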